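/- arXiv:2207.06887 — 2 statements merged into one kernel-verified Lean document; each statement's English description precedes it below -/
import Mathlib

section
/- Let T be a finite tree rooted at a centroid r. Then the sum of cut numbers S_c(T) = Σ_{e ∈ E(T)} min(|T_1(e)|, |T_2(e)|) (where removing edge e splits T into T_1(e) and T_2(e)) equals the sum of distances S_d(T) = Σ_{v} d_T(r,v). -/
/-- Size of the subtree rooted at `v` when the tree is rooted at `r`. -/
noncomputable def subtreeSize {V : Type} [Fintype V] [DecidableEq V]
    (T : SimpleGraph V) (r v : V) : ℕ :=
  (Finset.univ.filter (fun u => T.dist r v + T.dist v u = T.dist r u)).card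

/-- The cut number of an edge `e = s(u,v)` of a tree: the size of the smaller of the
two components obtained by removing `e` (a vertex `x` lies on the `v`-side iff it is
strictly closer to `v` than to `u`). -/
noncomputable def cutNum {V : Type} [Fintype V] [DecidableEq V]
    (T : SimpleGraph V) (e : Sym2 V) : ℕ :=
  Sym2.lift ⟨fun u v =>
    min ((Finset.univ.filter fun x => T.dist x u < T.dist x v).card)
        ((Finset.univ.filter fun x => T.dist x v < T.dist x u).card),
    fun u v => min_comm _ _⟩ e


namespace SumCutAux
open SimpleGraph Finset

variable {V : Type} [Fintype V] [DecidableEq V] {T : SimpleGraph V}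

lemma dist_getVert_le (hc : T.Connected) {a b : V} (p : T.Walk a b) :
    ∀ i, T.dist a (p.getVert i) ≤ i := by
  induction p with
  | nil => intro i; simp [Walk.getVert, SimpleGraph.dist_self]
  | @cons a c b h q ih =>
    intro i
    cases i with
    | zero => simp [SimpleGraph.dist_self]
    | succ n =>
      rw [Walk.getVert_cons_succ]
      have ht : T.dist a (q.getVert n) ≤ T.dist a c + T.dist c (q.getVert n) :=
        hc.dist_triangle
      have h1 : T.dist a c = 1 := SimpleGraph.dist_eq_one_iff_adj.2 h
      have := ih n
      omega

lemma dist_getVert_le' (hc : T.Connected) {a b : V} (p : T.Walk a b) :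
    ∀ i, T.dist (p.getVert i) b ≤ p.length - i := by
  induction p with
  | nil => intro i; simp [Walk.getVert, SimpleGraph.dist_self]
  | @cons a c b h q ih =>
    intro i
    cases i with
    | zero =>
      simp only [Walk.getVert_zero, Walk.length_cons]
      have ht : T.dist a b ≤ T.dist a c + T.dist c b := hc.dist_triangle
      have h1 : T.dist a c = 1 := SimpleGraph.dist_eq_one_iff_adj.2 h
      have := ih 0
      simp only [Walk.getVert_zero] at this
      omega
    | succ n =>
      rw [Walk.getVert_cons_succ, Walk.length_cons]
      have := ih n
      omega

lemma geodesic_getVert (hc : T.Connected) {a b : V} (p : T.Walk a b)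
    (hp : p.length = T.dist a b) {i : ℕ} (hi : i ≤ p.length) :
    T.dist a (p.getVert i) = i ∧ T.dist (p.getVert i) b = p.length - i := by
  have h1 := dist_getVert_le hc p i
  have h2 := dist_getVert_le' hc p i
  have h3 : T.dist a b ≤ T.dist a (p.getVert i) + T.dist (p.getVert i) b := hc.dist_triangle
  omega

end SumCutAux

set_option linter.unusedSectionVars false

namespace SumCutAux
open SimpleGraph Finset

variable {V : Type} [Fintype V] [DecidableEq V] {T : SimpleGraph V}

lemma dich (hT : T.IsTree) {u v : V} (huv : T.Adj u v) (x : V) :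
    T.dist x u + 1 = T.dist x v ∨ T.dist x v + 1 = T.dist x u := by
  have hc := hT.isConnected
  have h1 : T.dist u v = 1 := SimpleGraph.dist_eq_one_iff_adj.2 huv
  have t1 : T.dist x v ≤ T.dist x u + T.dist u v := hc.dist_triangle
  have t2 : T.dist x u ≤ T.dist x v + T.dist v u := hc.dist_triangle
  have h1' : T.dist v u = 1 := SimpleGraph.dist_eq_one_iff_adj.2 huv.symm
  by_contra hcon
  push_neg at hcon
  have heq : T.dist x u = T.dist x v := by omega
  obtain ⟨p, ppath, plen⟩ := (hc.preconnected x u).exists_path_of_dist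
  obtain ⟨q, qpath, qlen⟩ := (hc.preconnected x v).exists_path_of_dist
  have hvp : v ∉ p.support := by
    intro hv
    have d1 : T.dist x v ≤ (p.takeUntil v hv).length := SimpleGraph.dist_le _
    have d2 : T.dist v u ≤ (p.dropUntil v hv).length := SimpleGraph.dist_le _
    have d3 := congrArg Walk.length (p.take_spec hv)
    rw [Walk.length_append] at d3
    omega
  have wpath : (p.concat huv).IsPath := by
    rw [Walk.isPath_def, Walk.support_concat]
    rw [Walk.isPath_def] at ppath
    simp [List.nodup_append, ppath, hvp]
    rintro a ha rfl; exact hvp ha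
  have hu := hT.existsUnique_path x v
  have heq2 : p.concat huv = q := hu.unique wpath qpath
  have := congrArg Walk.length heq2
  rw [Walk.length_concat] at this
  omega

lemma flip_edge (hT : T.IsTree) {u v z z' : V} (huv : T.Adj u v) (hzz' : T.Adj z z')
    (h1 : T.dist z u < T.dist z v) (h2 : T.dist z' v < T.dist z' u) : z = u ∧ z' = v := by
  have hc := hT.isConnected
  have hd1 : T.dist z u + 1 = T.dist z v := by have := dich hT huv z; omega
  have hd2 : T.dist z' v + 1 = T.dist z' u := by have := dich hT huv z'; omega
  obtain ⟨p, ppath, plen⟩ := (hc.preconnected z u).exists_path_of_dist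
  obtain ⟨q, qpath, qlen⟩ := (hc.preconnected v z').exists_path_of_dist
  have hpside : ∀ w ∈ p.support, T.dist w u < T.dist w v := by
    intro w hw
    have d1 : T.dist z w ≤ (p.takeUntil w hw).length := SimpleGraph.dist_le _
    have d2 : T.dist w u ≤ (p.dropUntil w hw).length := SimpleGraph.dist_le _
    have d3 := congrArg Walk.length (p.take_spec hw)
    rw [Walk.length_append] at d3
    have t : T.dist z v ≤ T.dist z w + T.dist w v := hc.dist_triangle
    omega
  have hqside : ∀ w ∈ q.support, T.dist w v < T.dist w u := by
    intro w hw
    have d1 : T.dist v w ≤ (q.takeUntil w hw).length := SimpleGraph.dist_le _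
    have d2 : T.dist w z' ≤ (q.dropUntil w hw).length := SimpleGraph.dist_le _
    have d3 := congrArg Walk.length (q.take_spec hw)
    rw [Walk.length_append] at d3
    have t : T.dist z' u ≤ T.dist z' w + T.dist w u := hc.dist_triangle
    have c1 : T.dist v w = T.dist w v := SimpleGraph.dist_comm
    have c2 : T.dist z' w = T.dist w z' := SimpleGraph.dist_comm
    have c3 : T.dist v z' = T.dist z' v := SimpleGraph.dist_comm
    omega
  have wpath : (p.append (Walk.cons huv q)).IsPath := by
    rw [Walk.isPath_def, Walk.support_append, Walk.support_cons, List.tail_cons]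
    refine List.Nodup.append ?_ ?_ ?_
    · exact ppath.support_nodup
    · exact qpath.support_nodup
    · intro w hwp hwq
      have := hpside w hwp
      have := hqside w hwq
      omega
  have epath : (Walk.cons hzz' Walk.nil).IsPath := by
    simp [Walk.isPath_def, hzz'.ne]
  have hu := hT.existsUnique_path z z'
  have heq : p.append (Walk.cons huv q) = Walk.cons hzz' Walk.nil := hu.unique wpath epath
  have hl := congrArg Walk.length heq
  rw [Walk.length_append, Walk.length_cons, Walk.length_cons, Walk.length_nil] at hl
  have hz : T.dist z u = 0 := by omega
  have hz' : T.dist v z' = 0 := by omega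
  constructor
  · exact (hc.dist_eq_zero_iff).1 hz
  · exact ((hc.dist_eq_zero_iff).1 hz').symm

lemma find_flip (hT : T.IsTree) {u v : V} (huv : T.Adj u v) :
    ∀ {y x : V} (p : T.Walk y x), T.dist y u < T.dist y v → T.dist x v < T.dist x u →
      ∃ i, i < p.length ∧ p.getVert i = u ∧ p.getVert (i + 1) = v := by
  intro y x p
  induction p with
  | nil => intro h1 h2; omega
  | @cons y z x h q ih =>
    intro h1 h2
    by_cases hz : T.dist z v < T.dist z u
    · obtain ⟨hy, hzv⟩ := flip_edge hT huv h h1 hz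
      refine ⟨0, by simp [Walk.length_cons], by simp [hy], ?_⟩
      rw [Walk.getVert_cons_succ, Walk.getVert_zero]
      exact hzv
    · have hz' : T.dist z u < T.dist z v := by have := dich hT huv z; omega
      obtain ⟨i, hi, h3, h4⟩ := ih hz' h2
      refine ⟨i + 1, by rw [Walk.length_cons]; omega, ?_, ?_⟩
      · rw [Walk.getVert_cons_succ]; exact h3
      · rw [Walk.getVert_cons_succ]; exact h4

lemma crossing (hT : T.IsTree) {u v y x : V} (huv : T.Adj u v)
    (hy : T.dist y u < T.dist y v) (hx : T.dist x v < T.dist x u) :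
    T.dist y x = T.dist y u + 1 + T.dist v x := by
  have hc := hT.isConnected
  obtain ⟨p, plen⟩ := (hc.preconnected y x).exists_walk_length_eq_dist
  obtain ⟨i, hi, hgu, hgv⟩ := find_flip hT huv p hy hx
  have d1 : T.dist y u ≤ i := by have := dist_getVert_le hc p i; rwa [hgu] at this
  have d2 : T.dist v x ≤ p.length - (i + 1) := by
    have := dist_getVert_le' hc p (i + 1); rwa [hgv] at this
  have t1 : T.dist y x ≤ T.dist y u + T.dist u x := hc.dist_triangle
  have t2 : T.dist u x ≤ T.dist u v + T.dist v x := hc.dist_triangle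
  have h1 : T.dist u v = 1 := SimpleGraph.dist_eq_one_iff_adj.2 huv
  omega

lemma edge_getVert_mem {a b : V} (p : T.Walk a b) :
    ∀ i, i < p.length → s(p.getVert i, p.getVert (i + 1)) ∈ p.edges := by
  induction p with
  | nil => intro i hi; simp at hi
  | @cons a c b h q ih =>
    intro i hi
    cases i with
    | zero =>
      rw [Walk.edges_cons]
      simp only [Walk.getVert_cons_succ, Walk.getVert_zero]
      exact List.mem_cons_self
    | succ n =>
      rw [Walk.edges_cons, Walk.getVert_cons_succ, Walk.getVert_cons_succ]
      right
      exact ih n (by rw [Walk.length_cons] at hi; omega)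

lemma mem_edges_index {a b : V} (p : T.Walk a b) :
    ∀ e ∈ p.edges, ∃ i, i < p.length ∧ e = s(p.getVert i, p.getVert (i + 1)) := by
  induction p with
  | nil => intro e he; simp at he
  | @cons a c b h q ih =>
    intro e he
    rw [Walk.edges_cons, List.mem_cons] at he
    rcases he with he | he
    · exact ⟨0, by rw [Walk.length_cons]; omega, by
        rw [Walk.getVert_zero, Walk.getVert_cons_succ, Walk.getVert_zero]; exact he⟩
    · obtain ⟨i, hi, hei⟩ := ih e he
      exact ⟨i + 1, by rw [Walk.length_cons]; omega, by
        rw [Walk.getVert_cons_succ, Walk.getVert_cons_succ]; exact hei⟩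

end SumCutAux

namespace SumCutAux
open SimpleGraph Finset

variable {V : Type} [Fintype V] [DecidableEq V]

/-- edge `e` separates `r` from `x`. -/
def Sep (T : SimpleGraph V) (r x : V) (e : Sym2 V) : Prop :=
  ∃ u v : V, e = s(u, v) ∧ T.dist r u < T.dist r v ∧ T.dist x v < T.dist x u

noncomputable instance (T : SimpleGraph V) (r x : V) (e : Sym2 V) : Decidable (Sep T r x e) := by
  unfold Sep; infer_instance

variable {T : SimpleGraph V}

lemma sep_mk {r x u v : V} : Sep T r x s(u, v) ↔
    (T.dist r u < T.dist r v ∧ T.dist x v < T.dist x u) ∨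
    (T.dist r v < T.dist r u ∧ T.dist x u < T.dist x v) := by
  constructor
  · rintro ⟨a, b, hab, h1, h2⟩
    rw [Sym2.eq_iff] at hab
    rcases hab with ⟨rfl, rfl⟩ | ⟨rfl, rfl⟩
    · exact Or.inl ⟨h1, h2⟩
    · exact Or.inr ⟨h1, h2⟩
  · rintro (⟨h1, h2⟩ | ⟨h1, h2⟩)
    · exact ⟨u, v, rfl, h1, h2⟩
    · exact ⟨v, u, Sym2.eq_swap, h1, h2⟩

lemma dist_eq_card_sep [DecidableRel T.Adj] (hT : T.IsTree) (r x : V) :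
    T.dist r x = (T.edgeFinset.filter (Sep T r x)).card := by
  have hc := hT.isConnected
  obtain ⟨p, ppath, plen⟩ := (hc.preconnected r x).exists_path_of_dist
  have hset : T.edgeFinset.filter (Sep T r x) = p.edges.toFinset := by
    ext e
    rw [Finset.mem_filter, List.mem_toFinset, SimpleGraph.mem_edgeFinset]
    constructor
    · rintro ⟨he, u, v, rfl, h1, h2⟩
      have huv : T.Adj u v := (SimpleGraph.mem_edgeSet T).1 he
      obtain ⟨i, hi, hgu, hgv⟩ := find_flip hT huv p h1 h2
      have := edge_getVert_mem p i hi
      rwa [hgu, hgv] at this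
    · intro he
      refine ⟨p.edges_subset_edgeSet he, ?_⟩
      obtain ⟨i, hi, rfl⟩ := mem_edges_index p e he
      refine ⟨p.getVert i, p.getVert (i + 1), rfl, ?_, ?_⟩
      · have g1 := geodesic_getVert hc p plen (le_of_lt hi)
        have g2 := geodesic_getVert hc p plen (show i + 1 ≤ p.length by omega)
        omega
      · have g1 := geodesic_getVert hc p plen (le_of_lt hi)
        have g2 := geodesic_getVert hc p plen (show i + 1 ≤ p.length by omega)
        have c1 : T.dist x (p.getVert i) = T.dist (p.getVert i) x := SimpleGraph.dist_comm
        have c2 : T.dist x (p.getVert (i + 1)) = T.dist (p.getVert (i + 1)) x :=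
          SimpleGraph.dist_comm
        omega
  rw [hset, List.toFinset_card_of_nodup (ppath.edges_nodup), Walk.length_edges, plen]

end SumCutAux

namespace SumCutAux
open SimpleGraph Finset

variable {V : Type} [Fintype V] [DecidableEq V] {T : SimpleGraph V}

lemma cutNum_eq_aux (hT : T.IsTree) {r : V}
    (hcentroid : ∀ c, T.Adj r c → 2 * subtreeSize T r c ≤ Fintype.card V)
    {u v : V} (huv : T.Adj u v) (hruv : T.dist r u < T.dist r v) :
    cutNum T s(u, v) = (Finset.univ.filter (fun x => Sep T r x s(u, v))).card := by
  have hc := hT.isConnected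
  -- the filter is the set of vertices strictly closer to v
  have hAcard : (Finset.univ.filter (fun x => Sep T r x s(u, v))).card
      = (Finset.univ.filter (fun x => T.dist x v < T.dist x u)).card := by
    congr 1
    apply Finset.filter_congr
    intro x _
    rw [sep_mk]
    constructor
    · rintro (⟨_, h⟩ | ⟨h, _⟩) <;> omega
    · intro h; exact Or.inl ⟨hruv, h⟩
  set A := (Finset.univ.filter (fun x => T.dist x u < T.dist x v)).card with hA
  set B := (Finset.univ.filter (fun x => T.dist x v < T.dist x u)).card with hB
  have hAB : A + B = Fintype.card V := by
    rw [hA, hB]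
    have : (Finset.univ.filter (fun x => T.dist x v < T.dist x u))
        = (Finset.univ.filter (fun x => ¬ T.dist x u < T.dist x v)) := by
      apply Finset.filter_congr
      intro x _
      have := dich hT huv x
      constructor <;> (intro; omega)
    rw [this, Finset.card_filter_add_card_filter_not, Finset.card_univ]
  -- centroid bound : 2 * B ≤ card V
  have hBle : 2 * B ≤ Fintype.card V := by
    have hrv : r ≠ v := by
      rintro rfl
      rw [SimpleGraph.dist_self] at hruv
      omega
    -- find a neighbor c of r such that B-side ⊆ subtree of c
    obtain ⟨c, hrc, hkey⟩ :
        ∃ c, T.Adj r c ∧ ∀ x, T.dist x v < T.dist x u → T.dist r c + T.dist c x = T.dist r x := by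
      by_cases hru : u = r
      · subst hru
        refine ⟨v, huv, fun x hx => ?_⟩
        have hd := dich hT huv x
        have h1 : T.dist u v = 1 := SimpleGraph.dist_eq_one_iff_adj.2 huv
        have c1 : T.dist v x = T.dist x v := SimpleGraph.dist_comm
        have c2 : T.dist u x = T.dist x u := SimpleGraph.dist_comm
        omega
      · have hru' : 0 < T.dist r u := hc.pos_dist_of_ne (Ne.symm hru)
        obtain ⟨q, qlen⟩ := (hc.preconnected r u).exists_walk_length_eq_dist
        cases q with
        | nil => rw [Walk.length_nil] at qlen; omega
        | @cons _ c _ h q' =>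
          rw [Walk.length_cons] at qlen
          refine ⟨c, h, fun x hx => ?_⟩
          have hrc1 : T.dist r c = 1 := SimpleGraph.dist_eq_one_iff_adj.2 h
          have hcu : T.dist c u = T.dist r u - 1 := by
            have d1 : T.dist c u ≤ q'.length := SimpleGraph.dist_le _
            have t : T.dist r u ≤ T.dist r c + T.dist c u := hc.dist_triangle
            omega
          have hxside : T.dist x c < T.dist x r := by
            by_contra hcon
            have hxr : T.dist x r < T.dist x c := by
              have := dich hT h x; omega
            have huc : T.dist u c < T.dist u r := by
              have c1 : T.dist u c = T.dist c u := SimpleGraph.dist_comm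
              have c2 : T.dist u r = T.dist r u := SimpleGraph.dist_comm
              omega
            have e1 : T.dist x u = T.dist x r + 1 + T.dist c u := crossing hT h hxr huc
            have e2 : T.dist r x = T.dist r u + 1 + T.dist v x := crossing hT huv hruv hx
            have e3 := dich hT huv x
            have c1 : T.dist r x = T.dist x r := SimpleGraph.dist_comm
            have c2 : T.dist v x = T.dist x v := SimpleGraph.dist_comm
            omega
          have := dich hT h x
          have c1 : T.dist r x = T.dist x r := SimpleGraph.dist_comm
          have c2 : T.dist c x = T.dist x c := SimpleGraph.dist_comm
          omega
    have hsub : B ≤ subtreeSize T r c := by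
      rw [hB]
      unfold subtreeSize
      apply Finset.card_le_card
      intro x hx
      rw [Finset.mem_filter] at hx ⊢
      exact ⟨Finset.mem_univ x, hkey x hx.2⟩
    have := hcentroid c hrc
    omega
  have hmin : min A B = B := min_eq_right (by omega)
  rw [hAcard]
  show min A B = B
  exact hmin

lemma cutNum_eq (hT : T.IsTree) {r : V}
    (hcentroid : ∀ c, T.Adj r c → 2 * subtreeSize T r c ≤ Fintype.card V)
    (e : Sym2 V) (he : e ∈ T.edgeSet) :
    cutNum T e = (Finset.univ.filter (fun x => Sep T r x e)).card := by
  induction e with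
  | _ u v =>
    have huv : T.Adj u v := (SimpleGraph.mem_edgeSet T).1 he
    have hd := dich hT huv r
    rcases lt_or_ge (T.dist r u) (T.dist r v) with h | h
    · exact cutNum_eq_aux hT hcentroid huv h
    · have h' : T.dist r v < T.dist r u := by omega
      rw [Sym2.eq_swap]
      exact cutNum_eq_aux hT hcentroid huv.symm h'

end SumCutAux

theorem sum_cut_numbers_eq_sum_dist {V : Type} [Fintype V] [DecidableEq V]
    (T : SimpleGraph V) [DecidableRel T.Adj] (hT : T.IsTree) (r : V)
    (hcentroid : ∀ c, T.Adj r c → 2 * subtreeSize T r c ≤ Fintype.card V) :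
    ∑ e ∈ T.edgeFinset, cutNum T e = ∑ v, T.dist r v := by
  classical
  calc ∑ e ∈ T.edgeFinset, cutNum T e
      = ∑ e ∈ T.edgeFinset, (Finset.univ.filter (fun x => SumCutAux.Sep T r x e)).card := by
        apply Finset.sum_congr rfl
        intro e he
        exact SumCutAux.cutNum_eq hT hcentroid e (SimpleGraph.mem_edgeFinset.1 he)
    _ = ∑ e ∈ T.edgeFinset, ∑ x : V, (if SumCutAux.Sep T r x e then 1 else 0) := by
        apply Finset.sum_congr rfl
        intro e _
        rw [Finset.card_filter]
    _ = ∑ x : V, ∑ e ∈ T.edgeFinset, (if SumCutAux.Sep T r x e then 1 else 0) :=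
        Finset.sum_comm
    _ = ∑ x : V, (T.edgeFinset.filter (SumCutAux.Sep T r x)).card := by
        apply Finset.sum_congr rfl
        intro x _
        rw [Finset.card_filter]
    _ = ∑ v, T.dist r v := by
        apply Finset.sum_congr rfl
        intro x _
        exact (SumCutAux.dist_eq_card_sep hT r x).symm
end

section
/- Let G be a connected graph and T_m the BFS-tree (over all possible roots) minimizing S_d; let r be its root. Then r is a centroid of T_m, i.e., no child subtree of r in T_m contains more than half of the vertices. -/
/-- `T` is a BFS-tree of `G` rooted at `r`: a spanning tree realizing the
graph distances from `r`. -/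
def IsBFSTree {V : Type} (G T : SimpleGraph V) (r : V) : Prop :=
  T ≤ G ∧ T.IsTree ∧ ∀ v, T.dist r v = G.dist r v

open SimpleGraph

/-- If `T ≤ G` and `T` is connected, distances in `G` are at most distances in `T`. -/
lemma dist_le_dist_of_le {V : Type} {T G : SimpleGraph V} (hle : T ≤ G)
    (hT : T.Connected) (u v : V) : G.dist u v ≤ T.dist u v := by
  obtain ⟨p, hp⟩ := (hT u v).exists_walk_length_eq_dist
  calc G.dist u v ≤ (p.mapLe hle).length := G.dist_le _
    _ = p.length := by simp
    _ = T.dist u v := hp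

/-- Every vertex `v ≠ c` in a connected graph has a neighbor one step closer to `c`. -/
lemma exists_parent {V : Type} {G : SimpleGraph V} (hG : G.Connected) (c : V)
    {v : V} (hv : v ≠ c) : ∃ w, G.Adj w v ∧ G.dist c w + 1 = G.dist c v := by
  obtain ⟨q, hq⟩ := (hG v c).exists_walk_length_eq_dist
  have hpos : 0 < G.dist v c := hG.pos_dist_of_ne hv
  have hnn : ¬ q.Nil := by
    rw [SimpleGraph.Walk.not_nil_iff_lt_length, hq]; exact hpos
  obtain ⟨w, hvw, q', rfl⟩ := SimpleGraph.Walk.not_nil_iff.mp hnn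
  refine ⟨w, hvw.symm, ?_⟩
  have h1 : G.dist c w ≤ G.dist v c - 1 := by
    have := G.dist_le q'.reverse
    simp only [SimpleGraph.Walk.length_reverse] at this
    have hlen : q'.length = G.dist v c - 1 := by
      have := hq
      simp only [SimpleGraph.Walk.length_cons] at this
      omega
    omega
  have h2 : G.dist c v ≤ G.dist c w + 1 := by
    have htri := hG.dist_triangle (u := c) (v := w) (w := v)
    have hwv : G.dist w v ≤ 1 := by
      have := G.dist_le hvw.symm.toWalk
      simpa using this
    omega
  have hcv : G.dist c v = G.dist v c := G.dist_comm
  omega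

/-- Every connected graph has a BFS tree rooted at any vertex. -/
lemma exists_bfsTree {V : Type} (G : SimpleGraph V) (hG : G.Connected) (c : V) :
    ∃ T, IsBFSTree G T c := by
  classical
  have hpar : ∀ v, ∃ w, v ≠ c → G.Adj w v ∧ G.dist c w + 1 = G.dist c v := by
    intro v
    by_cases hv : v = c
    · exact ⟨c, fun h => absurd hv h⟩
    · obtain ⟨w, hw⟩ := exists_parent hG c hv
      exact ⟨w, fun _ => hw⟩
  choose p hp using hpar
  set T : SimpleGraph V := SimpleGraph.fromRel (fun a b => a ≠ c ∧ b = p a) with hT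
  have hadj : ∀ a b, T.Adj a b ↔ a ≠ b ∧ ((a ≠ c ∧ b = p a) ∨ (b ≠ c ∧ a = p b)) := by
    intro a b; rw [hT, SimpleGraph.fromRel_adj]
  have hle : T ≤ G := by
    intro a b hab
    rw [hadj] at hab
    rcases hab with ⟨hne, h | h⟩
    · rcases h with ⟨ha, rfl⟩
      exact ((hp a ha).1).symm
    · rcases h with ⟨hb, rfl⟩
      exact (hp b hb).1
  -- walks from c realizing distances
  have hwalk : ∀ n v, G.dist c v = n → ∃ w : T.Walk c v, w.length = G.dist c v := by
    intro n
    induction n using Nat.strong_induction_on with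
    | _ n ih =>
      intro v hn
      by_cases hv : v = c
      · subst hv; exact ⟨SimpleGraph.Walk.nil, by simp [SimpleGraph.dist_self]⟩
      · obtain ⟨hadj', hd⟩ := hp v hv
        have hlt : G.dist c (p v) < n := by omega
        obtain ⟨q, hq⟩ := ih _ hlt (p v) rfl
        have hTadj : T.Adj (p v) v := by
          rw [hadj]
          refine ⟨fun h => ?_, Or.inr ⟨hv, rfl⟩⟩
          · rw [h] at hd; omega
        refine ⟨q.concat hTadj, ?_⟩
        rw [SimpleGraph.Walk.length_concat, hq]
        omega
  have hwalk' : ∀ v, ∃ w : T.Walk c v, w.length = G.dist c v := fun v => hwalk _ v rfl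
  have hpre : T.Preconnected := fun u v =>
    ((hwalk' u).choose.reverse.append (hwalk' v).choose).reachable
  have hconn : T.Connected := by
    have : Nonempty V := ⟨c⟩
    exact ⟨hpre⟩
  have hdist : ∀ v, T.dist c v = G.dist c v := by
    intro v
    refine le_antisymm ?_ (dist_le_dist_of_le hle hconn c v)
    obtain ⟨w, hw⟩ := hwalk' v
    exact hw ▸ T.dist_le w
  -- acyclicity
  have hstep : ∀ a b, T.Adj a b → G.dist c b ≤ G.dist c a → b = p a := by
    intro a b hab hba
    rw [hadj] at hab
    rcases hab with ⟨hne, h | h⟩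
    · exact h.2
    · rcases h with ⟨hb, rfl⟩
      have := (hp b hb).2
      omega
  have hacyc : T.IsAcyclic := by
    intro x w hw
    have hxsup : x ∈ w.support.toFinset := by
      simp [SimpleGraph.Walk.start_mem_support]
    obtain ⟨m, hm, hmax⟩ := Finset.exists_max_image w.support.toFinset (G.dist c)
      ⟨x, hxsup⟩
    have hmsup : m ∈ w.support := List.mem_toFinset.mp hm
    set w' := w.rotate m hmsup with hw'def
    have hw' : w'.IsCycle := hw.rotate hmsup
    have hsupmax : ∀ y, y ∈ w'.support → G.dist c y ≤ G.dist c m := by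
      intro y hy
      rcases (SimpleGraph.Walk.mem_support_iff w').mp hy with rfl | hy'
      · exact le_refl _
      · have : y ∈ w.support.tail := (SimpleGraph.Walk.support_rotate w m hmsup).mem_iff.mp hy'
        exact hmax y (List.mem_toFinset.mpr (List.mem_of_mem_tail this))
    have hnn : ¬ w'.Nil := hw'.not_nil
    obtain ⟨y, hmy, q, hq⟩ := SimpleGraph.Walk.not_nil_iff.mp hnn
    have hnq : ¬ q.reverse.Nil :=
      SimpleGraph.Walk.not_nil_of_ne hmy.ne
    obtain ⟨z, hmz, q2, hq2⟩ := SimpleGraph.Walk.not_nil_iff.mp hnq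
    -- y and z are in the support of w'
    have hysup : y ∈ w'.support := by
      rw [hq, SimpleGraph.Walk.support_cons]
      exact List.mem_cons_of_mem _ q.start_mem_support
    have hzsup : z ∈ w'.support := by
      have hz : z ∈ q.reverse.support := by
        rw [hq2, SimpleGraph.Walk.support_cons]
        exact List.mem_cons_of_mem _ q2.start_mem_support
      rw [SimpleGraph.Walk.support_reverse, List.mem_reverse] at hz
      rw [hq, SimpleGraph.Walk.support_cons]
      exact List.mem_cons_of_mem _ hz
    have hy : y = p m := hstep m y hmy (hsupmax y hysup)
    have hz : z = p m := hstep m z hmz (hsupmax z hzsup)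
    -- the edge s(m,z) is among q's edges
    have hez : s(m, z) ∈ q.edges := by
      have : s(m, z) ∈ q.reverse.edges := by
        rw [hq2, SimpleGraph.Walk.edges_cons]
        exact List.mem_cons_self
      rwa [SimpleGraph.Walk.edges_reverse, List.mem_reverse] at this
    have hnodup : w'.edges.Nodup := hw'.isCircuit.isTrail.edges_nodup
    rw [hq, SimpleGraph.Walk.edges_cons, List.nodup_cons] at hnodup
    subst hy
    subst hz
    exact hnodup.1 hez
  exact ⟨T, hle, ⟨hconn, hacyc⟩, hdist⟩

theorem optimal_bfs_tree_root_is_centroid {V : Type} [Fintype V] [DecidableEq V]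
    (G Tm : SimpleGraph V) (r : V) (hG : G.Connected) (hBFS : IsBFSTree G Tm r)
    (hmin : ∀ (r' : V) (T' : SimpleGraph V), IsBFSTree G T' r' →
      ∑ v, Tm.dist r v ≤ ∑ v, T'.dist r' v) :
    ∀ c, Tm.Adj r c → 2 * subtreeSize Tm r c ≤ Fintype.card V := by
  classical
  obtain ⟨hle, htree, hdist⟩ := hBFS
  intro c hc
  obtain ⟨T', hT'le, hT'tree, hT'dist⟩ := exists_bfsTree G hG c
  have hmin' : (∑ v, G.dist r v) ≤ ∑ v, G.dist c v := by
    have := hmin c T' ⟨hT'le, hT'tree, hT'dist⟩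
    calc (∑ v, G.dist r v) = ∑ v, Tm.dist r v := by
          exact Finset.sum_congr rfl (fun v _ => (hdist v).symm)
      _ ≤ ∑ v, T'.dist c v := this
      _ = ∑ v, G.dist c v := Finset.sum_congr rfl (fun v _ => hT'dist v)
  set S : Finset V :=
    Finset.univ.filter (fun u => Tm.dist r c + Tm.dist c u = Tm.dist r u) with hS
  have hTmconn : Tm.Connected := htree.isConnected
  have hrc : Tm.dist r c = 1 := SimpleGraph.dist_eq_one_iff_adj.mpr hc
  -- vertices in the subtree are strictly closer to c
  have hin : ∀ v ∈ S, G.dist c v + 1 ≤ G.dist r v := by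
    intro v hv
    rw [hS, Finset.mem_filter] at hv
    have hveq : 1 + Tm.dist c v = Tm.dist r v := by rw [← hrc]; exact hv.2
    have h1 : G.dist c v ≤ Tm.dist c v := dist_le_dist_of_le hle hTmconn c v
    have h2 : Tm.dist r v = G.dist r v := hdist v
    omega
  -- all vertices satisfy the triangle inequality through r
  have hout : ∀ v, G.dist c v ≤ G.dist r v + 1 := by
    intro v
    have htri := hG.dist_triangle (u := c) (v := r) (w := v)
    have hcr : G.dist c r ≤ 1 := by
      have := G.dist_le (hle hc).symm.toWalk
      simpa using this
    omega
  have h1 : (∑ v ∈ S, G.dist c v) + S.card ≤ ∑ v ∈ S, G.dist r v := by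
    calc (∑ v ∈ S, G.dist c v) + S.card
        = ∑ v ∈ S, (G.dist c v + 1) := by
          rw [Finset.sum_add_distrib, Finset.sum_const, smul_eq_mul, mul_one]
      _ ≤ ∑ v ∈ S, G.dist r v := Finset.sum_le_sum hin
  have h2 : (∑ v ∈ Sᶜ, G.dist c v) ≤ (∑ v ∈ Sᶜ, G.dist r v) + Sᶜ.card := by
    calc (∑ v ∈ Sᶜ, G.dist c v) ≤ ∑ v ∈ Sᶜ, (G.dist r v + 1) :=
          Finset.sum_le_sum (fun v _ => hout v)
      _ = (∑ v ∈ Sᶜ, G.dist r v) + Sᶜ.card := by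
          rw [Finset.sum_add_distrib, Finset.sum_const, smul_eq_mul, mul_one]
  have hsplitc : (∑ v ∈ S, G.dist c v) + ∑ v ∈ Sᶜ, G.dist c v = ∑ v, G.dist c v :=
    S.sum_add_sum_compl _
  have hsplitr : (∑ v ∈ S, G.dist r v) + ∑ v ∈ Sᶜ, G.dist r v = ∑ v, G.dist r v :=
    S.sum_add_sum_compl _
  have hcard : S.card + Sᶜ.card = Fintype.card V := S.card_add_card_compl
  have hSle : S.card ≤ Sᶜ.card := by omega
  have : subtreeSize Tm r c = S.card := rfl
  omega
end
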